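/- The mass matrix M of the modified Patankar Euler scheme, defined by M_{ii} = 1 + Δt Σ_k d_{i,k}(c^n)/c_i^n and M_{ij} = −Δt p_{i,j}(c^n)/c_j^n for i ≠ j, is strictly diagonally dominant by columns, i.e., for every column j, M_{jj} > Σ_{i≠j} |M_{ij}|. -/

import Mathlib

/-- The mass matrix of the modified Patankar Euler scheme is strictly diagonally dominant by
columns. -/
theorem modified_patankar_mass_matrix_diag_dominant
    (I : ℕ) (p d : Fin I → Fin I → ℝ)
    (hp : ∀ i j, 0 ≤ p i j) (hd : ∀ i j, 0 ≤ d i j)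
    (hcons : ∀ i j, p i j = d j i)
    (hdiagp : ∀ i, p i i = 0) (hdiagd : ∀ i, d i i = 0)
    (Δt : ℝ) (hΔt : 0 < Δt)
    (cn : Fin I → ℝ) (hpos : ∀ i, 0 < cn i)
    (M : Matrix (Fin I) (Fin I) ℝ)
    (hM : ∀ i j, M i j =
      if i = j then 1 + Δt * ∑ k, d i k / cn i else -(Δt * p i j / cn j)) :
    ∀ j, ∑ i ∈ Finset.univ.erase j, |M i j| < M j j := by
  intro j
  have hsum : ∑ i ∈ Finset.univ.erase j, |M i j|
      = Δt * ∑ k, d j k / cn j := by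
    have h1 : ∑ i ∈ Finset.univ.erase j, |M i j|
        = ∑ i ∈ Finset.univ.erase j, Δt * d j i / cn j := by
      refine Finset.sum_congr rfl fun i hi => ?_
      have hij : i ≠ j := Finset.ne_of_mem_erase hi
      rw [hM i j, if_neg hij, abs_neg, abs_of_nonneg, hcons]
      exact div_nonneg (mul_nonneg hΔt.le (hp _ _)) (hpos j).le
    rw [h1, Finset.sum_erase _ (by simp [hdiagd]), Finset.mul_sum]
    exact Finset.sum_congr rfl fun k _ => by ring
  rw [hsum, hM, if_pos rfl]
  linarith
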